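/- In a quantity space X over a field K with basis B, a quantity x is invertible if and only if μ_B(x) ≠ 0, and in that case μ_B(x⁻¹) = μ_B(x)⁻¹. -/

import Mathlib

/-- A scalable monoid `X` over a commutative unital ring `R`: a monoid with a
scalar multiplication satisfying `1 • x = x`, `α • (β • x) = (α*β) • x` and
`α • (x*y) = (α • x) * y = x * (α • y)`. -/
class ScalableMonoid (R X : Type*) [CommRing R] [Monoid X] extends SMul R X where
  one_smul : ∀ x : X, (1 : R) • x = x
  mul_smul : ∀ (α β : R) (x : X), α • β • x = (α * β) • x
  smul_mul_assoc : ∀ (α : R) (x y : X), α • (x * y) = (α • x) * y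
  mul_smul_comm : ∀ (α : R) (x y : X), α • (x * y) = x * (α • y)

/-- Commensurability: `x ∼ y` iff `α • x = β • y` for some scalars `α β`. -/
def Commen (R : Type*) {X : Type*} [CommRing R] [Monoid X] [ScalableMonoid R X]
    (x y : X) : Prop :=
  ∃ α β : R, α • x = β • y

/-- A (finite) basis for a commutative scalable monoid over a field `K`:
a family of invertible elements such that every `x` has a unique expansion
`x = μ • ∏ i, b i ^ k i` with `μ ∈ K` and integer exponents `k i`. -/
def IsBasis (K : Type*) {X : Type*} [Field K] [CommMonoid X] [ScalableMonoid K X]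
    {n : ℕ} (b : Fin n → Xˣ) : Prop :=
  ∀ x : X, ∃! p : K × (Fin n → ℤ), x = p.1 • ((∏ i, b i ^ p.2 i : Xˣ) : X)

/-- The qMeasure of `x` relative to the basis `b`: the unique scalar in its expansion. -/
noncomputable def qMeasure {K X : Type*} [Field K] [CommMonoid X] [ScalableMonoid K X]
    {n : ℕ} {b : Fin n → Xˣ} (hB : IsBasis K b) (x : X) : K :=
  (hB x).exists.choose.1

section Aux

variable {K X : Type*} [Field K] [CommMonoid X] [ScalableMonoid K X]
  {n : ℕ} {b : Fin n → Xˣ}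

lemma smul_mul_smul'' (α β : K) (x y : X) :
    (α • x) * (β • y) = (α * β) • (x * y) := by
  rw [← ScalableMonoid.smul_mul_assoc, ← ScalableMonoid.mul_smul_comm,
    ScalableMonoid.mul_smul]

lemma qMeasure_spec (hB : IsBasis K b) (x : X) :
    x = qMeasure hB x • ((∏ i, b i ^ (hB x).exists.choose.2 i : Xˣ) : X) :=
  (hB x).exists.choose_spec

lemma qMeasure_unique (hB : IsBasis K b) {x : X} {μ : K} {k : Fin n → ℤ}
    (h : x = μ • ((∏ i, b i ^ k i : Xˣ) : X)) : qMeasure hB x = μ := by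
  have h' : x = ((μ, k) : K × (Fin n → ℤ)).1 •
      ((∏ i, b i ^ ((μ, k) : K × (Fin n → ℤ)).2 i : Xˣ) : X) := h
  exact congrArg Prod.fst ((hB x).unique (hB x).exists.choose_spec h')

lemma qMeasure_one (hB : IsBasis K b) : qMeasure hB (1 : X) = 1 := by
  apply qMeasure_unique hB (k := fun _ => 0)
  simp [ScalableMonoid.one_smul]

lemma qMeasure_mul_eq_one (hB : IsBasis K b) {x y : X} (h : x * y = 1) :
    qMeasure hB x * qMeasure hB y = 1 := by
  have hx := qMeasure_spec hB x
  have hy := qMeasure_spec hB y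
  have : (1 : X) = (qMeasure hB x * qMeasure hB y) •
      ((∏ i, b i ^ ((hB x).exists.choose.2 i + (hB y).exists.choose.2 i) : Xˣ) : X) := by
    have hprod : (∏ i, b i ^ ((hB x).exists.choose.2 i + (hB y).exists.choose.2 i) : Xˣ) =
        (∏ i, b i ^ (hB x).exists.choose.2 i) * (∏ i, b i ^ (hB y).exists.choose.2 i) := by
      rw [← Finset.prod_mul_distrib]
      exact Finset.prod_congr rfl fun i _ => zpow_add (b i) _ _
    rw [← h]
    conv_lhs => rw [hx, hy]
    rw [smul_mul_smul'', hprod, Units.val_mul]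
  have := qMeasure_unique hB this
  rw [qMeasure_one hB] at this
  exact this.symm

end Aux

theorem isUnit_iff_qMeasure_ne_zero {K X : Type*} [Field K] [CommMonoid X] [ScalableMonoid K X]
    {n : ℕ} {b : Fin n → Xˣ} (hB : IsBasis K b) (x : X) :
    (IsUnit x ↔ qMeasure hB x ≠ 0) ∧
    (∀ y : X, x * y = 1 → y * x = 1 → qMeasure hB y = (qMeasure hB x)⁻¹) := by
  constructor
  · constructor
    · rintro ⟨u, rfl⟩
      have h := qMeasure_mul_eq_one hB u.mul_inv
      intro h0
      rw [h0, zero_mul] at h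
      exact one_ne_zero h.symm
    · intro h0
      have hx := qMeasure_spec hB x
      set u : Xˣ := ∏ i, b i ^ (hB x).exists.choose.2 i with hu
      set μ := qMeasure hB x with hμ
      apply IsUnit.of_mul_eq_one (a := x) (μ⁻¹ • ((u⁻¹ : Xˣ) : X))
      rw [hx, smul_mul_smul'', mul_inv_cancel₀ h0, ScalableMonoid.one_smul]
      exact u.mul_inv
  · intro y hxy _
    have h := qMeasure_mul_eq_one hB hxy
    have h0 : qMeasure hB x ≠ 0 := by
      intro h0; rw [h0, zero_mul] at h; exact one_ne_zero h.symm
    exact eq_inv_of_mul_eq_one_left (by rw [mul_comm]; exact h)
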